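/- Let T be a canonical earliest deterministic total top-down tree transducer with axiom A. If T is equivalent to a homomorphism h, then for every a ∈ Σ of rank k, the tree T(a(x₁,...,x_k)) is subtree conform to A. -/

import Mathlib

namespace TreeTrans

/-- Finite trees with nodes labeled by `α`. -/
inductive Tree (α : Type) : Type
  | node : α → List (Tree α) → Tree α

namespace Tree

variable {α β γ δ : Type}

def label : Tree α → α | node a _ => a
def children : Tree α → List (Tree α) | node _ ts => ts

/-- The height of a tree (a leaf has height 1). -/
def height : Tree α → ℕ
  | node _ ts => (ts.attach.map fun c => height c.1).foldr max 0 + 1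
decreasing_by
  have := List.sizeOf_lt_of_mem c.2
  simp only [Tree.node.sizeOf_spec]; omega

def mapLabel (f : α → β) : Tree α → Tree β
  | node a ts => node (f a) (ts.attach.map fun c => mapLabel f c.1)
decreasing_by
  have := List.sizeOf_lt_of_mem c.2
  simp only [Tree.node.sizeOf_spec]; omega

/-- The subtree rooted at a node (a node is a list of child indices). -/
def subtreeAt : Tree α → List ℕ → Option (Tree α)
  | t, [] => some t
  | node _ ts, i :: p =>
    match ts[i]? with
    | some c => subtreeAt c p
    | none => none

/-- The set `V(t)` of nodes of a tree. -/
def pos (t : Tree α) : Set (List ℕ) := {p | (t.subtreeAt p).isSome}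

/-- The label `t[v]` of a node (if the node exists). -/
def labelAt (t : Tree α) (p : List ℕ) : Option α := (t.subtreeAt p).map label

/-- The list of variable leaves (in left-to-right order) of a tree over `α ⊕ β`,
where `β` plays the role of the variables. -/
def varList : Tree (α ⊕ β) → List β
  | node (.inl _) ts => (ts.attach.map fun c => varList c.1).flatten
  | node (.inr x) _ => [x]
decreasing_by
  have := List.sizeOf_lt_of_mem c.2
  simp only [Tree.node.sizeOf_spec]; omega

/-- Substitution of the variables of a tree. -/
def substGen (f : γ → Tree (α ⊕ β)) : Tree (α ⊕ γ) → Tree (α ⊕ β)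
  | node (.inl a) ts => node (.inl a) (ts.attach.map fun c => substGen f c.1)
  | node (.inr x) _ => f x
decreasing_by
  have := List.sizeOf_lt_of_mem c.2
  simp only [Tree.node.sizeOf_spec]; omega

/-- View a tree over `α ⊕ β` as a tree over `α`; fails if a variable occurs. -/
def toDelta : Tree (α ⊕ β) → Option (Tree α)
  | node (.inl d) ts => ((ts.attach.map fun c => toDelta c.1).mapM id).map (node d)
  | node (.inr _) _ => none
decreasing_by
  have := List.sizeOf_lt_of_mem c.2
  simp only [Tree.node.sizeOf_spec]; omega

open Classical in
/-- The maximal common prefix pattern `t₁ ⊔ t₂` of two trees; positions where the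
trees differ are replaced by a variable (labeled `none`). -/
noncomputable def lcp : Tree α → Tree α → Tree (Option α)
  | node a ts, node b us =>
    if a = b ∧ ts.length = us.length then
      node (some a) ((ts.zip us).attach.map fun c => lcp c.1.1 c.1.2)
    else node none []
termination_by t _ => sizeOf t
decreasing_by
  obtain ⟨⟨x, y⟩, hm⟩ := c
  have := List.sizeOf_lt_of_mem (List.of_mem_zip hm).1
  simp only [Tree.node.sizeOf_spec]; omega

end Tree

open Tree

/-- A tree is well-formed w.r.t. a rank function if every node labeled `a`
has exactly `rank a` children. -/
def WF (rank : α → ℕ) (t : Tree α) : Prop :=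
  ∀ p u, t.subtreeAt p = some u → u.children.length = rank u.label

/-- Rank function on labels including variables (variables have rank 0). -/
def rankV (rank : α → ℕ) : α ⊕ β → ℕ := Sum.elim rank fun _ => 0

/-- All variable indices occurring in the tree are `< k`. -/
def VarsLt (k : ℕ) (t : Tree (α ⊕ β × ℕ)) : Prop := ∀ x ∈ varList t, x.2 < k

/-- Ground trees: no variables occur. -/
def GroundT (t : Tree (α ⊕ β)) : Prop := varList t = []

/-- Embedding of pure trees into trees possibly containing variables. -/
def embed : Tree α → Tree (α ⊕ β) := mapLabel Sum.inl

/-- The input tree `x₁`. -/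
def xvar {α : Type} : Tree (α ⊕ ℕ) := .node (.inr 0) []

/-- A context: a well-formed input tree containing exactly one variable,
namely `x₁` (index `0`). -/
def IsContext (rank : α → ℕ) (c : Tree (α ⊕ ℕ)) : Prop :=
  WF (rankV rank) c ∧ varList c = [0]

/-- A member of `T_Σ{X_k}`: each of the variables `x₁,…,x_k` occurs exactly once
and in left-to-right order. -/
def IsPattern (rank : α → ℕ) (k : ℕ) (s : Tree (α ⊕ ℕ)) : Prop :=
  WF (rankV rank) s ∧ varList s = List.range k

/-- `c·s`, plugging `s` into the unique variable of the context `c`. -/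
def plug (c : Tree (α ⊕ ℕ)) (s : Tree (α ⊕ β)) : Tree (α ⊕ β) :=
  substGen (fun _ => s) c

/-- A node labeled `b` (a "state-variable" leaf) occurs in `t`. -/
def OccursIn (t : Tree (α ⊕ β)) (b : β) : Prop := ∃ p, t.labelAt p = some (.inr b)

/-- `v` is the lowest common ancestor (longest common prefix) of the set `S` of nodes. -/
def IsLcaOf (S : Set (List ℕ)) (v : List ℕ) : Prop :=
  (∀ p ∈ S, v <+: p) ∧ ∀ w, (∀ p ∈ S, w <+: p) → w <+: v

/-- The set of nodes of `t` labeled `q(x_i)` for some state `q`. -/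
def varPos (t : Tree (α ⊕ β × γ)) (i : γ) : Set (List ℕ) :=
  {p | ∃ q : β, t.labelAt p = some (.inr (q, i))}

/-- An output tree is lca-conform if below the lowest common ancestor `ν(x_i)` of
the leaves labeled `q(x_i)` no leaf labeled `q(x_j)` with `j ≠ i` occurs. -/
def LcaConformTree (t : Tree (α ⊕ β × γ)) : Prop :=
  ∀ i v, IsLcaOf (varPos t i) v → ∀ u, t.subtreeAt v = some u →
    ∀ p q j, j ≠ i → u.labelAt p ≠ some (.inr (q, j))

/-- `t₁ ≃ t₂`: equality up to a bijective renaming of the variables. -/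
def Simeq (t₁ t₂ : Tree (α ⊕ β × ℕ)) : Prop :=
  ∃ f : ℕ → ℕ,
    Set.BijOn f {x | x ∈ (varList t₁).map Prod.snd} {x | x ∈ (varList t₂).map Prod.snd} ∧
    t₂ = mapLabel (Sum.map id (Prod.map id f)) t₁

/-- `t` is subtree conform to `t'`. -/
inductive SubtreeConform (t' : Tree (α ⊕ β × ℕ)) : Tree (α ⊕ β × ℕ) → Prop
  | ground (t) : GroundT t → SubtreeConform t' t
  | simeq (t) : Simeq t t' → SubtreeConform t' t
  | comp (d : α) (ts : List (Tree (α ⊕ β × ℕ))) :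
      (∀ c ∈ ts, SubtreeConform t' c) → SubtreeConform t' (.node (.inl d) ts)

/-- Second-order substitution: replace every leaf labeled `(q, i)` by `f q i`. -/
def applyRhs {Q Δ β : Type} (f : Q → ℕ → Tree (Δ ⊕ β)) :
    Tree (Δ ⊕ Q × ℕ) → Tree (Δ ⊕ β)
  | .node (.inl d) ts => .node (.inl d) (ts.attach.map fun c => applyRhs f c.1)
  | .node (.inr (q, i)) _ => f q i
decreasing_by
  have := List.sizeOf_lt_of_mem c.2
  simp only [Tree.node.sizeOf_spec]; omega

/-- Partial second-order substitution. -/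
def applyRhsO {Q Δ β : Type} (f : Q → ℕ → Option (Tree (Δ ⊕ β))) :
    Tree (Δ ⊕ Q × ℕ) → Option (Tree (Δ ⊕ β))
  | .node (.inl d) ts =>
      ((ts.attach.map fun c => applyRhsO f c.1).mapM id).map (.node (.inl d))
  | .node (.inr (q, i)) _ => f q i
decreasing_by
  have := List.sizeOf_lt_of_mem c.2
  simp only [Tree.node.sizeOf_spec]; omega

/-- A deterministic total top-down tree transducer. -/
structure TDTT (Q Sig Δ : Type) (rankS : Sig → ℕ) (rankD : Δ → ℕ) : Type where
  /-- the right-hand side `rhs_T(q,a) ∈ T_Δ[Q(X_k)]` of the rule for `(q,a)` -/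
  rhs : Q → Sig → Tree (Δ ⊕ Q × ℕ)
  /-- the axiom `A ∈ T_Δ[Q(X₁)]` -/
  axm : Tree (Δ ⊕ Q × ℕ)
  rhs_wf : ∀ q a, WF (rankV rankD) (rhs q a) ∧ VarsLt (rankS a) (rhs q a)
  axm_wf : WF (rankV rankD) axm ∧ VarsLt 1 axm

namespace TDTT

variable {Q Q' Sig Δ : Type} {rankS : Sig → ℕ} {rankD : Δ → ℕ}

/-- The semantics `[[q]] : T_Σ[X] → T_Δ[Q(X)]`. -/
def semState (T : TDTT Q Sig Δ rankS rankD) : Q → Tree (Sig ⊕ ℕ) → Tree (Δ ⊕ Q × ℕ)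
  | q, .node (.inl a) ss =>
      applyRhs (fun q' i =>
        match h : ss[i]? with
        | some s => T.semState q' s
        | none => .node (.inr (q', i)) []) (T.rhs q a)
  | q, .node (.inr x) _ => .node (.inr (q, x)) []
decreasing_by
  have hm : s ∈ ss := by
    first
      | exact List.mem_of_getElem? h
      | exact (List.getElem?_eq_some_iff.1 h).elim fun hi e => e ▸ List.getElem_mem hi
  have := List.sizeOf_lt_of_mem hm
  simp only [Tree.node.sizeOf_spec]; omega

/-- The translation `T(s) = A[q(x₁) ← [[q]](s)]`. -/
def run (T : TDTT Q Sig Δ rankS rankD) (s : Tree (Sig ⊕ ℕ)) : Tree (Δ ⊕ Q × ℕ) :=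
  applyRhs (fun q _ => T.semState q s) T.axm

/-- Equivalence of two transducers: equality on all ground input trees. -/
def Equiv (T : TDTT Q Sig Δ rankS rankD) (T' : TDTT Q' Sig Δ rankS rankD) : Prop :=
  ∀ s : Tree Sig, WF rankS s → toDelta (T.run (embed s)) = toDelta (T'.run (embed s))

/-- `T` is earliest: for each state, `⊔ {[[q]](s) | s ∈ T_Σ} = x₁`, i.e. there are two
ground input trees on which `[[q]]` produces different root symbols. -/
def Earliest (T : TDTT Q Sig Δ rankS rankD) : Prop :=
  ∀ q : Q, ∃ s₁ s₂ : Tree Sig, WF rankS s₁ ∧ WF rankS s₂ ∧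
    (T.semState q (embed s₁)).label ≠ (T.semState q (embed s₂)).label

/-- Distinct states realize distinct functions on ground trees. -/
def Canonical (T : TDTT Q Sig Δ rankS rankD) : Prop :=
  ∀ q₁ q₂ : Q, q₁ ≠ q₂ → ∃ s : Tree Sig, WF rankS s ∧
    T.semState q₁ (embed s) ≠ T.semState q₂ (embed s)

def CanonicalEarliest (T : TDTT Q Sig Δ rankS rankD) : Prop :=
  T.Earliest ∧ T.Canonical

/-- Linearity: every variable occurs at most once in the axiom and each right-hand side. -/
def Linear (T : TDTT Q Sig Δ rankS rankD) : Prop :=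
  ((varList T.axm).map Prod.snd).Nodup ∧
  ∀ q a, ((varList (T.rhs q a)).map Prod.snd).Nodup

/-- States `q₁` and `q₂` occur pairwise in `T`. -/
def PairwiseOccur (T : TDTT Q Sig Δ rankS rankD) (q₁ q₂ : Q) : Prop :=
  ∃ c, IsContext rankS c ∧ ∃ p₁ p₂, p₁ ≠ p₂ ∧
    (T.run c).labelAt p₁ = some (.inr (q₁, 0)) ∧
    (T.run c).labelAt p₂ = some (.inr (q₂, 0))

/-- `(q₁,q₂) ⊢^c (q₁',q₂')`. -/
def Step (T : TDTT Q Sig Δ rankS rankD) (q₁ q₂ : Q) (c : Tree (Sig ⊕ ℕ))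
    (q₁' q₂' : Q) : Prop :=
  OccursIn (T.semState q₁ c) (q₁', 0) ∧ OccursIn (T.semState q₂ c) (q₂', 0) ∧
  (T.semState q₁ c ≠ .node (.inr (q₁', 0)) [] ∨ T.semState q₂ c ≠ .node (.inr (q₂', 0)) [])

/-- `T` is zero output twinned. -/
def ZeroOutputTwinned (T : TDTT Q Sig Δ rankS rankD) : Prop :=
  ¬ ∃ q₁ q₂ c, T.PairwiseOccur q₁ q₂ ∧ IsContext rankS c ∧ c ≠ xvar ∧
      T.Step q₁ q₂ c q₁ q₂

/-- `T` is lca-conform. -/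
def LcaConform (T : TDTT Q Sig Δ rankS rankD) : Prop :=
  ∀ k (s : Tree (Sig ⊕ ℕ)), IsPattern rankS k s → LcaConformTree (T.run s)

/-- A homomorphism: a single-state transducer with axiom `q(x₁)`. -/
def IsHom (h : TDTT Unit Sig Δ rankS rankD) : Prop :=
  h.axm = .node (.inr ((), 0)) []

end TDTT

/-- The input tree `a(x₁,…,x_k)` where `k = rank a`. -/
def inputAtom (rankS : Sig → ℕ) (a : Sig) : Tree (Sig ⊕ ℕ) :=
  .node (.inl a) ((List.range (rankS a)).map fun i => .node (.inr i) [])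

/-- A deterministic (partial) top-down tree transducer with regular look-ahead. -/
structure LATT (Q Sig Δ L : Type) (rankS : Sig → ℕ) (rankD : Δ → ℕ) : Type where
  /-- the (possibly partial) transition function of the la-automaton -/
  delta : Sig → List L → Option L
  /-- the axiom `A(l) ∈ T_Δ[Q(X₁)]`, assigned exactly to the accepting la-states -/
  axm : L → Option (Tree (Δ ⊕ Q × ℕ))
  /-- the right-hand side of the rule for `(q, a, l₁,…,l_k)` (at most one rule) -/
  rhs : Q → Sig → List L → Option (Tree (Δ ⊕ Q × ℕ))
  axm_wf : ∀ l t, axm l = some t → WF (rankV rankD) t ∧ VarsLt 1 t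
  rhs_wf : ∀ q a ls t, rhs q a ls = some t →
    WF (rankV rankD) t ∧ VarsLt (rankS a) t ∧ ls.length = rankS a

namespace LATT

variable {Q Q' Sig Δ L L' : Type} {rankS : Sig → ℕ} {rankD : Δ → ℕ}

/-- The set `F` of accepting la-states. -/
def F (M : LATT Q Sig Δ L rankS rankD) : Set L := {l | (M.axm l).isSome}

/-- The extension `δ*` of the transition function to trees in `T_Σ[L]`. -/
def deltaStar (M : LATT Q Sig Δ L rankS rankD) : Tree (Sig ⊕ L) → Option L
  | .node (.inl a) ss =>
      ((ss.attach.map fun c => M.deltaStar c.1).mapM id).bind (M.delta a)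
  | .node (.inr l) _ => some l
decreasing_by
  have := List.sizeOf_lt_of_mem c.2
  simp only [Tree.node.sizeOf_spec]; omega

mutual
/-- `[[q]]_u(s)`: the semantics of state `q` at input node `u`. -/
def lsem (M : LATT Q Sig Δ L rankS rankD) (q : Q) (u : List ℕ) :
    Tree (Sig ⊕ L) → Option (Tree (Δ ⊕ Q × List ℕ))
  | .node (.inr _) _ => some (.node (.inr (q, u)) [])
  | .node (.inl a) ss =>
      match (ss.map fun s => M.deltaStar s).mapM id with
      | none => none
      | some ls =>
        match M.rhs q a ls with
        | none => none
        | some r =>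
          applyRhsO (fun q' i => (M.lsemList u 0 ss).getD i (fun _ => none) <| q') r
termination_by t => sizeOf t
decreasing_by
  simp only [Tree.node.sizeOf_spec]; omega
def lsemList (M : LATT Q Sig Δ L rankS rankD) (u : List ℕ) (i : ℕ) :
    List (Tree (Sig ⊕ L)) → List (Q → Option (Tree (Δ ⊕ Q × List ℕ)))
  | [] => []
  | s :: ss => (fun q' => M.lsem q' (u ++ [i]) s) :: M.lsemList u (i + 1) ss
termination_by l => sizeOf l
decreasing_by
  all_goals (simp only [List.cons.sizeOf_spec]; omega)
end

/-- The translation `M(s)` for `s ∈ T_Σ[L]` (defined iff `δ*(s) ∈ F` and all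
needed rules exist). -/
def lrun (M : LATT Q Sig Δ L rankS rankD) (s : Tree (Sig ⊕ L)) :
    Option (Tree (Δ ⊕ Q × List ℕ)) :=
  (M.deltaStar s).bind fun l => (M.axm l).bind fun ax =>
    applyRhsO (fun q _ => M.lsem q [] s) ax

/-- Equivalence of two la-transducers: the same partial function on ground trees. -/
def EquivL (M : LATT Q Sig Δ L rankS rankD) (N : LATT Q' Sig Δ L' rankS rankD) : Prop :=
  ∀ s : Tree Sig, WF rankS s →
    (M.lrun (embed s)).bind toDelta = (N.lrun (embed s)).bind toDelta

/-- Equivalence of an la-transducer and a total transducer without look-ahead. -/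
def EquivT (M : LATT Q Sig Δ L rankS rankD) (T : TDTT Q' Sig Δ rankS rankD) : Prop :=
  ∀ s : Tree Sig, WF rankS s →
    (M.lrun (embed s)).bind toDelta = toDelta (T.run (embed s))

/-- `M` is total. -/
def Total (M : LATT Q Sig Δ L rankS rankD) : Prop :=
  ∀ s : Tree Sig, WF rankS s → (M.lrun (embed s)).isSome

/-- `M` is la-uniform with la-map `ρ`. -/
def LaUniformWith (M : LATT Q Sig Δ L rankS rankD) (ρ : Q → L) : Prop :=
  (∀ l t, M.axm l = some t → ∀ q i, OccursIn t (q, i) → ρ q = l) ∧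
  (∀ q a ls, ls.length = rankS a → ((M.rhs q a ls).isSome ↔ M.delta a ls = some (ρ q))) ∧
  (∀ q a ls t, M.rhs q a ls = some t → ∀ q' i, OccursIn t (q', i) → ls[i]? = some (ρ q'))

/-- `M` is la-uniform. -/
def LaUniform (M : LATT Q Sig Δ L rankS rankD) : Prop := ∃ ρ, M.LaUniformWith ρ

/-- `M` (la-uniform via `ρ`) is earliest. -/
def EarliestWith (M : LATT Q Sig Δ L rankS rankD) (ρ : Q → L) : Prop :=
  ∀ q : Q, ∃ (s₁ s₂ : Tree Sig) (t₁ t₂ : Tree (Δ ⊕ Q × List ℕ)),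
    WF rankS s₁ ∧ WF rankS s₂ ∧
    M.deltaStar (embed s₁) = some (ρ q) ∧ M.deltaStar (embed s₂) = some (ρ q) ∧
    M.lsem q [] (embed s₁) = some t₁ ∧ M.lsem q [] (embed s₂) = some t₂ ∧
    t₁.label ≠ t₂.label

/-- Distinct states with the same look-ahead realize distinct functions. -/
def CanonWith (M : LATT Q Sig Δ L rankS rankD) (ρ : Q → L) : Prop :=
  ∀ q₁ q₂ : Q, q₁ ≠ q₂ → ρ q₁ = ρ q₂ → ∃ s : Tree Sig, WF rankS s ∧
    M.deltaStar (embed s) = some (ρ q₁) ∧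
    M.lsem q₁ [] (embed s) ≠ M.lsem q₂ [] (embed s)

/-- `M` is canonical earliest. -/
def CanonicalEarliest (M : LATT Q Sig Δ L rankS rankD) : Prop :=
  ∃ ρ, M.LaUniformWith ρ ∧ M.EarliestWith ρ ∧ M.CanonWith ρ

/-- Linearity of an la-transducer. -/
def Linear (M : LATT Q Sig Δ L rankS rankD) : Prop :=
  (∀ l t, M.axm l = some t → ((varList t).map Prod.snd).Nodup) ∧
  (∀ q a ls t, M.rhs q a ls = some t → ((varList t).map Prod.snd).Nodup)

/-- A trivial look-ahead automaton: the la-transducer is in effect a transducer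
without look-ahead. -/
def TrivialLA (M : LATT Q Sig Δ Unit rankS rankD) : Prop :=
  (∀ a ls, M.delta a ls = some ()) ∧ (M.axm ()).isSome

/-- A (possibly partial) homomorphism presented as a transducer without look-ahead:
single state, trivial look-ahead and axiom `q(x₁)`. -/
def IsHomLA (M : LATT Unit Sig Δ Unit rankS rankD) : Prop :=
  (∀ a ls, M.delta a ls = some ()) ∧ M.axm () = some (.node (.inr ((), 0)) [])

/-- `M` is lca-conform. -/
def LcaConform (M : LATT Q Sig Δ L rankS rankD) : Prop :=
  ∀ s : Tree (Sig ⊕ L), WF (rankV rankS) s →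
    ∀ t, M.lrun s = some t → LcaConformTree t

/-- `n` is a difference bound of `M`: an upper bound on the heights of all
difference trees of `M`. -/
def DifferenceBound (M : LATT Q Sig Δ L rankS rankD) (n : ℕ) : Prop :=
  ∀ (c : Tree (Sig ⊕ ℕ)) (l₁ l₂ : L) t₁ t₂, IsContext rankS c →
    M.lrun (plug c (.node (.inr l₁) [])) = some t₁ →
    M.lrun (plug c (.node (.inr l₂) [])) = some t₂ →
    ∀ v, (Tree.lcp t₁ t₂).labelAt v = some none →
      ∀ u₁ u₂, t₁.subtreeAt v = some u₁ → t₂.subtreeAt v = some u₂ →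
        u₁.height ≤ n ∧ u₂.height ≤ n

end LATT

mutual
/-- `graft tM tN p`: replace in `tN` (located at position `p` of the full tree) every
node not labeled by an output symbol by the subtree of `tM` at the same position. -/
def graft {Δ β β' : Type} (tM : Tree (Δ ⊕ β)) : Tree (Δ ⊕ β') → List ℕ → Tree (Δ ⊕ β)
  | .node (.inl d) ts, p => .node (.inl d) (graftList tM p 0 ts)
  | .node (.inr _) _, p => (tM.subtreeAt p).getD tM
termination_by t _ => sizeOf t
decreasing_by
  simp only [Tree.node.sizeOf_spec]; omega
def graftList {Δ β β' : Type} (tM : Tree (Δ ⊕ β)) (p : List ℕ) (i : ℕ) :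
    List (Tree (Δ ⊕ β')) → List (Tree (Δ ⊕ β))
  | [] => []
  | t :: ts => graft tM t (p ++ [i]) :: graftList tM p (i + 1) ts
termination_by l => sizeOf l
decreasing_by
  all_goals (simp only [List.cons.sizeOf_spec]; omega)
end

/-- A tree uses only symbols from `P`. -/
def UsesOnly {Sig : Type} (P : Set Sig) (s : Tree Sig) : Prop :=
  ∀ p u, s.subtreeAt p = some u → u.label ∈ P

open Tree

section AuxBasic
variable {α β γ Q Δ Sig : Type}

theorem Tree.indOn {P : Tree α → Prop}
    (h : ∀ a ts, (∀ t ∈ ts, P t) → P (.node a ts)) : ∀ t, P t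
  | .node a ts => h a ts (fun t ht => Tree.indOn h t)
termination_by t => sizeOf t
decreasing_by
  have := List.sizeOf_lt_of_mem ht
  simp only [Tree.node.sizeOf_spec]; omega

@[simp] theorem applyRhs_inl (f : Q → ℕ → Tree (Δ ⊕ β)) (d : Δ) (ts) :
    applyRhs f (.node (.inl d) ts) = .node (.inl d) (ts.map (applyRhs f)) := by
  rw [applyRhs, List.attach_map_val]

@[simp] theorem applyRhs_inr (f : Q → ℕ → Tree (Δ ⊕ β)) (q : Q) (i : ℕ) (ts) :
    applyRhs f (.node (.inr (q, i)) ts) = f q i := by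
  rw [applyRhs]

@[simp] theorem mapLabel_node (f : α → β) (a : α) (ts) :
    mapLabel f (.node a ts) = .node (f a) (ts.map (mapLabel f)) := by
  rw [mapLabel, List.attach_map_val]

@[simp] theorem varList_inl (a : α) (ts : List (Tree (α ⊕ β))) :
    varList (.node (.inl a) ts) = (ts.map varList).flatten := by
  rw [varList, List.attach_map_val]

@[simp] theorem varList_inr (x : β) (ts : List (Tree (α ⊕ β))) :
    varList (.node (Sum.inr x) ts) = [x] := by
  rw [varList]

theorem mem_varList_of_child {a : α} {ts : List (Tree (α ⊕ β))} {c : Tree (α ⊕ β)}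
    (hc : c ∈ ts) {x : β} (hx : x ∈ varList c) :
    x ∈ varList (Tree.node (.inl a) ts) := by
  simp only [varList_inl, List.mem_flatten]
  exact ⟨varList c, List.mem_map_of_mem hc, hx⟩

theorem embed_node (a : α) (ts : List (Tree α)) :
    (embed (.node a ts) : Tree (α ⊕ β)) = .node (.inl a) (ts.map embed) := by
  rw [embed, mapLabel_node]

theorem applyRhs_applyRhs {Q' : Type} (f : Q' → ℕ → Tree (Δ ⊕ β))
    (g : Q → ℕ → Tree (Δ ⊕ Q' × ℕ)) (t : Tree (Δ ⊕ Q × ℕ)) :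
    applyRhs f (applyRhs g t) = applyRhs (fun q i => applyRhs f (g q i)) t := by
  induction t using Tree.indOn with
  | h a ts IH =>
    cases a with
    | inl d => simp only [applyRhs_inl, List.map_map]
               exact congrArg _ (List.map_congr_left fun c hc => IH c hc)
    | inr x => obtain ⟨q, i⟩ := x; simp

theorem applyRhs_congr {f g : Q → ℕ → Tree (Δ ⊕ β)} (t : Tree (Δ ⊕ Q × ℕ))
    (hfg : ∀ q i, (q, i) ∈ varList t → f q i = g q i) :
    applyRhs f t = applyRhs g t := by
  induction t using Tree.indOn with
  | h a ts IH =>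
    cases a with
    | inl d =>
      simp only [applyRhs_inl]
      exact congrArg _ (List.map_congr_left fun c hc => IH c hc
        fun q i hqi => hfg q i (mem_varList_of_child hc hqi))
    | inr x => obtain ⟨q, i⟩ := x; simpa using hfg q i (by simp)

theorem ground_applyRhs {f : Q → ℕ → Tree (Δ ⊕ β)} {t : Tree (Δ ⊕ Q × ℕ)}
    (hf : ∀ q i, (q, i) ∈ varList t → varList (f q i) = []) :
    varList (applyRhs f t) = [] := by
  induction t using Tree.indOn with
  | h a ts IH =>
    cases a with
    | inl d =>
      simp only [applyRhs_inl, varList_inl, List.map_map, List.flatten_eq_nil_iff]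
      rintro l hl
      simp only [List.mem_map, Function.comp] at hl
      obtain ⟨c, hc, rfl⟩ := hl
      exact IH c hc fun q i hqi => hf q i (mem_varList_of_child hc hqi)
    | inr x => obtain ⟨q, i⟩ := x; simpa using hf q i (by simp)

theorem applyRhs_of_ground {t : Tree (Δ ⊕ Q × ℕ)} (h : varList t = [])
    (f : Q → ℕ → Tree (Δ ⊕ Q × ℕ)) : applyRhs f t = t := by
  induction t using Tree.indOn with
  | h a ts IH =>
    cases a with
    | inl d =>
      simp only [varList_inl, List.flatten_eq_nil_iff] at h
      simp only [applyRhs_inl]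
      refine congrArg _ ?_
      rw [show ts.map (applyRhs f) = ts.map id from
        List.map_congr_left fun c hc => IH c hc (h _ (List.mem_map_of_mem hc)), List.map_id]
    | inr x => simp at h

theorem mapLabel_mapLabel (f : β → γ) (g : α → β) (t : Tree α) :
    mapLabel f (mapLabel g t) = mapLabel (f ∘ g) t := by
  induction t using Tree.indOn with
  | h a ts IH =>
    simp only [mapLabel_node, List.map_map]
    exact congrArg _ (List.map_congr_left fun c hc => IH c hc)

theorem varList_mapLabel {α' β' : Type} (f : α → α') (g : β → β') (t : Tree (α ⊕ β)) :
    varList (mapLabel (Sum.map f g) t) = (varList t).map g := by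
  induction t using Tree.indOn with
  | h a ts IH =>
    cases a with
    | inl d =>
      simp only [mapLabel_node, Sum.map_inl, varList_inl, List.map_map, List.map_flatten]
      exact congrArg _ (List.map_congr_left fun c hc => by
        simpa [Function.comp] using IH c hc)
    | inr x => simp

end AuxBasic
section AuxNVC
variable {α β Q Δ Sig : Type}

/-- No-variable-children: every `inr`-labeled node is a leaf. -/
inductive NVC : Tree (α ⊕ β) → Prop
  | inl (d : α) (ts : List (Tree (α ⊕ β))) : (∀ t ∈ ts, NVC t) → NVC (.node (.inl d) ts)
  | inr (x : β) : NVC (.node (.inr x) [])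

theorem subtreeAt_nil (t : Tree α) : t.subtreeAt [] = some t := by
  cases t; rw [Tree.subtreeAt]

theorem subtreeAt_cons (a : α) (ts : List (Tree α)) (i : ℕ) (p : List ℕ) :
    (Tree.node a ts).subtreeAt (i :: p) =
      match ts[i]? with
      | some c => c.subtreeAt p
      | none => none := by
  rw [Tree.subtreeAt]

theorem WF_child {rank : α → ℕ} {a : α} {ts : List (Tree α)}
    (hW : WF rank (.node a ts)) {t : Tree α} (ht : t ∈ ts) : WF rank t := by
  obtain ⟨i, hi, rfl⟩ := List.getElem_of_mem ht
  intro p u hu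
  refine hW (i :: p) u ?_
  rw [subtreeAt_cons, List.getElem?_eq_getElem hi]
  exact hu

theorem WF_node {rank : α → ℕ} {a : α} {ts : List (Tree α)}
    (hlen : ts.length = rank a) (hts : ∀ t ∈ ts, WF rank t) : WF rank (.node a ts) := by
  intro p u hu
  cases p with
  | nil =>
    rw [subtreeAt_nil] at hu
    cases hu
    simpa [Tree.children, Tree.label] using hlen
  | cons i p =>
    rw [subtreeAt_cons] at hu
    rcases hi : ts[i]? with _ | c
    · rw [hi] at hu; cases hu
    · rw [hi] at hu
      exact hts c (List.mem_of_getElem? hi) p u hu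

theorem NVC_of_WF {rank : α → ℕ} {t : Tree (α ⊕ β)} (h : WF (rankV rank) t) : NVC t := by
  induction t using Tree.indOn with
  | h a ts IH =>
    cases a with
    | inl d => exact NVC.inl d ts fun c hc => IH c hc (WF_child h hc)
    | inr x =>
      have := h [] _ (subtreeAt_nil _)
      simp only [Tree.children, Tree.label, rankV, Sum.elim_inr] at this
      rw [List.length_eq_zero_iff] at this
      subst this
      exact NVC.inr x

theorem NVC_applyRhs {f : Q → ℕ → Tree (Δ ⊕ β)} (hf : ∀ q i, NVC (f q i))
    (t : Tree (Δ ⊕ Q × ℕ)) : NVC (applyRhs f t) := by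
  induction t using Tree.indOn with
  | h a ts IH =>
    cases a with
    | inl d =>
      rw [applyRhs_inl]
      refine NVC.inl d _ fun c hc => ?_
      obtain ⟨c', hc', rfl⟩ := List.mem_map.mp hc
      exact IH c' hc'
    | inr x => obtain ⟨q, i⟩ := x; rw [applyRhs_inr]; exact hf q i

theorem mapLabel_eq_self {t : Tree (α ⊕ β × ℕ)} (hN : NVC t) (g : ℕ → ℕ)
    (hg : ∀ x ∈ varList t, g x.2 = x.2) :
    mapLabel (Sum.map id (Prod.map id g)) t = t := by
  induction hN with
  | inl d ts hts IH =>
    simp only [mapLabel_node, Sum.map_inl, id]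
    refine congrArg _ ?_
    rw [show ts.map (mapLabel (Sum.map id (Prod.map id g))) = ts.map id from
      List.map_congr_left fun c hc => IH c hc fun x hx =>
        hg x (mem_varList_of_child hc hx), List.map_id]
  | inr x =>
    obtain ⟨q, i⟩ := x
    have := hg (q, i) (by simp)
    simp only [mapLabel_node, Sum.map_inr, Prod.map, id, List.map_nil]
    rw [this]

theorem list_exists_map {l : List α} {f : β → α} (h : ∀ a ∈ l, ∃ b, a = f b) :
    ∃ l' : List β, l = l'.map f := by
  induction l with
  | nil => exact ⟨[], rfl⟩
  | cons a l IH =>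
    obtain ⟨b, hb⟩ := h a List.mem_cons_self
    obtain ⟨l', hl'⟩ := IH fun x hx => h x (List.mem_cons_of_mem _ hx)
    exact ⟨b :: l', by rw [List.map_cons, ← hb, ← hl']⟩

theorem ground_exists_embed {t : Tree (α ⊕ β)} (h : varList t = []) :
    ∃ u, t = embed u := by
  induction t using Tree.indOn with
  | h a ts IH =>
    cases a with
    | inl d =>
      simp only [varList_inl, List.flatten_eq_nil_iff] at h
      obtain ⟨us, hus⟩ := list_exists_map (f := (embed : Tree α → Tree (α ⊕ β)))
        (fun c hc => IH c hc (h _ (List.mem_map_of_mem hc)))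
      exact ⟨.node d us, by rw [embed_node, hus]⟩
    | inr x => simp at h

theorem mapM_id_map_some (l : List α) : (l.map some).mapM id = some l := by
  rw [← List.mapM'_eq_mapM]
  induction l with
  | nil => rfl
  | cons a l IH => simp [List.mapM', IH]

theorem toDelta_embed (u : Tree α) : toDelta (embed u : Tree (α ⊕ β)) = some u := by
  induction u using Tree.indOn with
  | h a ts IH =>
    rw [embed_node, toDelta, List.attach_map_val]
    rw [List.map_map, show (ts.map (toDelta ∘ (embed : Tree α → Tree (α ⊕ β)))) = ts.map some
      from List.map_congr_left fun c hc => IH c hc, mapM_id_map_some]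
    rfl

theorem ground_toDelta_inj {β' : Type} {t₁ : Tree (α ⊕ β)} {t₂ : Tree (α ⊕ β')}
    (h₁ : varList t₁ = []) (h₂ : varList t₂ = []) (h : toDelta t₁ = toDelta t₂) :
    ∃ u, t₁ = embed u ∧ t₂ = embed u := by
  obtain ⟨u₁, rfl⟩ := ground_exists_embed h₁
  obtain ⟨u₂, rfl⟩ := ground_exists_embed h₂
  rw [toDelta_embed, toDelta_embed] at h
  cases h
  exact ⟨u₁, rfl, rfl⟩

end AuxNVC
section AuxSem
variable {Q Sig Δ : Type} {rankS : Sig → ℕ} {rankD : Δ → ℕ}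

theorem semState_inr (T : TDTT Q Sig Δ rankS rankD) (q : Q) (x : ℕ) (ts) :
    T.semState q (.node (.inr x) ts) = .node (.inr (q, x)) [] := by
  rw [TDTT.semState]

theorem semState_inl_congr (T : TDTT Q Sig Δ rankS rankD) (q : Q) (a : Sig)
    (ss : List (Tree (Sig ⊕ ℕ))) (f : Q → ℕ → Tree (Δ ⊕ Q × ℕ))
    (hf1 : ∀ q' i s, (q', i) ∈ varList (T.rhs q a) → ss[i]? = some s →
      f q' i = T.semState q' s)
    (hf2 : ∀ q' i, (q', i) ∈ varList (T.rhs q a) → ss[i]? = none →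
      f q' i = .node (.inr (q', i)) []) :
    T.semState q (.node (.inl a) ss) = applyRhs f (T.rhs q a) := by
  rw [TDTT.semState]
  refine applyRhs_congr _ fun q' i hi => ?_
  split
  next s heq => exact (hf1 q' i s hi heq).symm
  next heq => exact (hf2 q' i hi heq).symm

theorem root_length (rank : α → ℕ) {a : α} {ts : List (Tree α)}
    (hW : WF rank (.node a ts)) : ts.length = rank a := by
  have := hW [] _ (subtreeAt_nil _)
  simpa [Tree.children, Tree.label] using this

theorem ground_semState (T : TDTT Q Sig Δ rankS rankD) (s : Tree Sig) :
    WF rankS s → ∀ q, varList (T.semState q (embed s)) = [] := by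
  induction s using Tree.indOn with
  | h a ts IH =>
    intro hW q
    rw [embed_node, TDTT.semState]
    refine ground_applyRhs fun q' i hi => ?_
    have hik : i < ts.length := by
      rw [root_length rankS hW]
      exact (T.rhs_wf q a).2 (q', i) hi
    have hgi : (ts.map embed)[i]? = some (embed (ts[i]'hik) : Tree (Sig ⊕ ℕ)) := by
      rw [List.getElem?_map, List.getElem?_eq_getElem hik]; rfl
    split
    next s' heq =>
      rw [hgi] at heq
      cases heq
      exact IH _ (List.getElem_mem hik) (WF_child hW (List.getElem_mem hik)) q'
    next heq => rw [hgi] at heq; cases heq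

theorem ground_run (T : TDTT Q Sig Δ rankS rankD) {s : Tree Sig} (hs : WF rankS s) :
    varList (T.run (embed s)) = [] :=
  ground_applyRhs fun q _ _ => ground_semState T s hs q

theorem hom_run (h : TDTT Unit Sig Δ rankS rankD) (hHom : h.IsHom) (s : Tree (Sig ⊕ ℕ)) :
    h.run s = h.semState () s := by
  rw [TDTT.run, hHom, applyRhs_inr]

theorem run_eq_hom {T : TDTT Q Sig Δ rankS rankD} {h : TDTT Unit Sig Δ rankS rankD}
    (hHom : h.IsHom) (hEq : T.Equiv h) {s : Tree Sig} (hs : WF rankS s) :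
    ∃ u : Tree Δ, T.run (embed s) = (embed u : Tree (Δ ⊕ Q × ℕ)) ∧
      h.semState () (embed s) = (embed u : Tree (Δ ⊕ Unit × ℕ)) := by
  have h1 := ground_run T hs
  have h2 : varList (h.run (embed s)) = [] := ground_run h hs
  have h3 := hEq s hs
  rw [hom_run h hHom] at h2
  rw [hom_run h hHom] at h3
  exact ground_toDelta_inj h1 h2 h3

theorem semState_inputAtom (T : TDTT Q Sig Δ rankS rankD) (q : Q) (a : Sig) :
    T.semState q (inputAtom rankS a)
      = applyRhs (fun q' i => .node (.inr (q', i)) []) (T.rhs q a) := by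
  rw [inputAtom]
  refine semState_inl_congr T q a _ _ (fun q' i s _ hs => ?_) (fun q' i _ _ => rfl)
  have hik : i < rankS a := by
    by_contra hik
    rw [List.getElem?_eq_none (by simpa using Nat.le_of_not_lt hik)] at hs
    cases hs
  rw [List.getElem?_map, List.getElem?_range hik] at hs
  cases hs
  rw [semState_inr]
-- test getElem?_range name

theorem embed_inj {α β : Type} {u u' : Tree α} (h : (embed u : Tree (α ⊕ β)) = embed u') :
    u = u' := by
  have := congrArg toDelta h
  rw [toDelta_embed, toDelta_embed] at this
  exact Option.some_injective _ this

end AuxSem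

/-- Strip a rhs-tree to a ground tree, substituting `g q i` for variable leaves. -/
def stripRhs {Q Δ : Type} (g : Q → ℕ → Tree Δ) : Tree (Δ ⊕ Q × ℕ) → Tree Δ
  | .node (.inl d) ts => .node d (ts.attach.map fun c => stripRhs g c.1)
  | .node (.inr (q, i)) _ => g q i
decreasing_by
  have := List.sizeOf_lt_of_mem c.2
  simp only [Tree.node.sizeOf_spec]; omega

theorem applyRhs_embed {Q Δ β : Type} (g : Q → ℕ → Tree Δ) (t : Tree (Δ ⊕ Q × ℕ)) :
    applyRhs (fun q i => (embed (g q i) : Tree (Δ ⊕ β))) t = embed (stripRhs g t) := by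
  induction t using Tree.indOn with
  | h a ts IH =>
    cases a with
    | inl d =>
      rw [applyRhs_inl, stripRhs, List.attach_map_val, embed_node]
      rw [List.map_map]
      exact congrArg _ (List.map_congr_left fun c hc => IH c hc)
    | inr x => obtain ⟨q, i⟩ := x; rw [applyRhs_inr, stripRhs]

section Star
variable {Q Sig Δ : Type} {rankS : Sig → ℕ} {rankD : Δ → ℕ}

/-- The key equation: substituting ground trees into `T(a(x₁,…,x_k))` can be
factored through the homomorphism's right-hand side. -/
theorem star {T : TDTT Q Sig Δ rankS rankD} {h : TDTT Unit Sig Δ rankS rankD}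
    (hHom : h.IsHom) (hEq : T.Equiv h) (a : Sig) (σ : ℕ → Tree Sig)
    (hσ : ∀ i, WF rankS (σ i)) :
    applyRhs (fun q i => T.semState q (embed (σ i))) (T.run (inputAtom rankS a))
      = applyRhs (fun _ i => applyRhs (fun q _ => T.semState q (embed (σ i))) T.axm)
          (h.rhs () a) := by
  classical
  set k := rankS a with hk
  set ss : List (Tree Sig) := (List.range k).map σ with hss
  have hlen : ss.length = k := by simp [hss]
  have hsw : WF rankS (Tree.node a ss) := by
    refine WF_node (by rw [hlen]) fun t ht => ?_
    obtain ⟨i, _, rfl⟩ := List.mem_map.mp ht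
    exact hσ i
  have hgetem : ∀ i, i < k → (ss.map embed)[i]? = some (embed (σ i) : Tree (Sig ⊕ ℕ)) := by
    intro i hi
    rw [List.getElem?_map, hss, List.getElem?_map, List.getElem?_range hi]
    rfl
  -- LHS = T.run (embed (node a ss))
  have hL : applyRhs (fun q i => T.semState q (embed (σ i))) (T.run (inputAtom rankS a))
      = T.run (embed (Tree.node a ss)) := by
    rw [TDTT.run, TDTT.run, applyRhs_applyRhs]
    refine applyRhs_congr _ fun q _ _ => ?_
    rw [semState_inputAtom, applyRhs_applyRhs]
    rw [embed_node]
    refine (semState_inl_congr T q a _ _ (fun q' i s hi hs => ?_) (fun q' i hi hn => ?_)).symm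
    · have hik : i < k := (T.rhs_wf q a).2 (q', i) hi
      rw [hgetem i hik] at hs
      cases hs
      rw [applyRhs_inr]
    · have hik : i < k := (T.rhs_wf q a).2 (q', i) hi
      rw [hgetem i hik] at hn
      cases hn
  -- get the common ground trees
  obtain ⟨ustar, hu1, hu2⟩ := run_eq_hom hHom hEq hsw
  have hui : ∀ i, ∃ u : Tree Δ, T.run (embed (σ i)) = (embed u : Tree (Δ ⊕ Q × ℕ)) ∧
      h.semState () (embed (σ i)) = (embed u : Tree (Δ ⊕ Unit × ℕ)) :=
    fun i => run_eq_hom hHom hEq (hσ i)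
  choose u hu hu' using hui
  -- h-side computation
  have hH : h.semState () (embed (Tree.node a ss))
      = applyRhs (fun _ i => (embed (u i) : Tree (Δ ⊕ Unit × ℕ))) (h.rhs () a) := by
    rw [embed_node]
    refine semState_inl_congr h () a _ _ (fun q' i s hi hs => ?_) (fun q' i hi hn => ?_)
    · have hik : i < k := (h.rhs_wf () a).2 (q', i) hi
      rw [hgetem i hik] at hs
      cases hs
      exact (hu' i).symm ▸ rfl
    · have hik : i < k := (h.rhs_wf () a).2 (q', i) hi
      rw [hgetem i hik] at hn
      cases hn
  -- transport across state types via stripRhs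
  rw [applyRhs_embed] at hH
  have hstar : ustar = stripRhs (fun _ i => u i) (h.rhs () a) := by
    refine embed_inj (β := Unit × ℕ) ?_
    rw [← hu2, hH]
  -- RHS computation
  have hR : applyRhs (fun _ i => applyRhs (fun q _ => T.semState q (embed (σ i))) T.axm)
        (h.rhs () a)
      = applyRhs (fun (_ : Unit) i => (embed (u i) : Tree (Δ ⊕ Q × ℕ))) (h.rhs () a) := by
    refine applyRhs_congr _ fun q' i _ => ?_
    have : applyRhs (fun q _ => T.semState q (embed (σ i))) T.axm = T.run (embed (σ i)) := by
      rw [TDTT.run]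
    rw [this, hu i]
  rw [hL, hR, applyRhs_embed, ← hstar, hu1]

end Star
section Core
variable {Q Sig Δ : Type} {rankS : Sig → ℕ} {rankD : Δ → ℕ}

theorem map_eq_map_getElem {α α' β : Type} {l₁ : List α} {l₂ : List α'} {f : α → β}
    {g : α' → β} (h : l₁.map f = l₂.map g) {m : ℕ} (hm : m < l₁.length) :
    ∃ hm' : m < l₂.length, f (l₁[m]) = g (l₂[m]'hm') := by
  have hlen : l₁.length = l₂.length := by simpa using congrArg List.length h
  refine ⟨hlen ▸ hm, ?_⟩
  have h2 := congrArg (fun l => l[m]?) h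
  simp only [List.getElem?_map, List.getElem?_eq_getElem hm,
    List.getElem?_eq_getElem (hlen ▸ hm), Option.map_some] at h2
  exact Option.some_injective _ h2

theorem label_applyRhs_inl {β : Type} (f : Q → ℕ → Tree (Δ ⊕ β)) (d : Δ) (ts) :
    (applyRhs f (.node (.inl d) ts)).label = .inl d := by
  rw [applyRhs_inl]; rfl

/-- The rename lemma: if `E[q(xᵢ) ← [[q]](σ i)] = A'[q(x) ← [[q]](σ j)]` for all ground
substitutions, then `E` is `A'` with all variables renamed to `j`. -/
theorem renameLemma {T : TDTT Q Sig Δ rankS rankD} (hCE : T.CanonicalEarliest)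
    (s₀ : Tree Sig) (hs₀ : WF rankS s₀) :
    ∀ (A' : Tree (Δ ⊕ Q × ℕ)), NVC A' → ∀ (E : Tree (Δ ⊕ Q × ℕ)), NVC E → ∀ j : ℕ,
    (∀ σ : ℕ → Tree Sig, (∀ i, WF rankS (σ i)) →
      applyRhs (fun q i => T.semState q (embed (σ i))) E
        = applyRhs (fun q _ => T.semState q (embed (σ j))) A') →
    E = mapLabel (Sum.map id (Prod.map id (fun _ => j))) A' := by
  intro A' hA'
  induction hA' with
  | inl d ts hts IH =>
    intro E hE j hyp
    cases E with
    | node lab es =>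
      cases lab with
      | inr x =>
        obtain ⟨q', j'⟩ := x
        exfalso
        obtain ⟨s₁, s₂, hw1, hw2, hne⟩ := hCE.1 q'
        have e₁ := hyp (fun _ => s₁) (fun _ => hw1)
        have e₂ := hyp (fun _ => s₂) (fun _ => hw2)
        rw [applyRhs_inr] at e₁ e₂
        apply hne
        rw [e₁, e₂, label_applyRhs_inl, label_applyRhs_inl]
      | inl d' =>
        have e₀ := hyp (fun _ => s₀) (fun _ => hs₀)
        rw [applyRhs_inl, applyRhs_inl] at e₀
        obtain ⟨h1, h2⟩ := Tree.node.inj e₀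
        have hd : d' = d := Sum.inl.inj h1
        rw [hd]
        have hch : ∀ t ∈ es, NVC t := by cases hE; assumption
        have hlen : es.length = ts.length := by simpa using congrArg List.length h2
        rw [mapLabel_node]
        have hlab : (Sum.map id (Prod.map id fun _ => j) (Sum.inl d : Δ ⊕ Q × ℕ))
            = Sum.inl d := rfl
        rw [hlab]
        refine congrArg _ (List.ext_getElem (by simpa using hlen) fun m hm hm' => ?_)
        have hm₂ : m < ts.length := by simpa using hm'
        rw [List.getElem_map]
        refine IH _ (List.getElem_mem hm₂) _ (hch _ (List.getElem_mem hm)) j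
          fun σ hσ => ?_
        have e := hyp σ hσ
        rw [applyRhs_inl, applyRhs_inl] at e
        obtain ⟨-, h2'⟩ := Tree.node.inj e
        obtain ⟨hx, he⟩ := map_eq_map_getElem h2' hm
        exact he
  | inr x =>
    obtain ⟨q0, i₀⟩ := x
    intro E hE j hyp
    have hyp' : ∀ σ : ℕ → Tree Sig, (∀ i, WF rankS (σ i)) →
        applyRhs (fun q i => T.semState q (embed (σ i))) E
          = T.semState q0 (embed (σ j)) := by
      intro σ hσ
      have := hyp σ hσ
      rwa [applyRhs_inr] at this
    cases E with
    | node lab es =>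
      cases lab with
      | inl d' =>
        exfalso
        obtain ⟨s₁, s₂, hw1, hw2, hne⟩ := hCE.1 q0
        have e₁ := hyp' (fun _ => s₁) (fun _ => hw1)
        have e₂ := hyp' (fun _ => s₂) (fun _ => hw2)
        apply hne
        rw [← e₁, ← e₂, label_applyRhs_inl, label_applyRhs_inl]
      | inr x' =>
        obtain ⟨q', j'⟩ := x'
        have hes : es = [] := by cases hE; rfl
        subst hes
        have hyp2 : ∀ σ : ℕ → Tree Sig, (∀ i, WF rankS (σ i)) →
            T.semState q' (embed (σ j')) = T.semState q0 (embed (σ j)) := by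
          intro σ hσ
          have := hyp' σ hσ
          rwa [applyRhs_inr] at this
        have hj : j' = j := by
          by_contra hne'
          obtain ⟨s₁, s₂, hw1, hw2, hne⟩ := hCE.1 q0
          have e₁ := hyp2 (fun m => if m = j then s₁ else s₀)
            (fun i => by split <;> [exact hw1; exact hs₀])
          have e₂ := hyp2 (fun m => if m = j then s₂ else s₀)
            (fun i => by split <;> [exact hw2; exact hs₀])
          rw [if_neg hne', if_pos rfl] at e₁
          rw [if_neg hne', if_pos rfl] at e₂
          exact hne (by rw [← e₁, ← e₂])
        subst hj
        have hq : q' = q0 := by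
          by_contra hne'
          obtain ⟨s, hw, hne2⟩ := hCE.2 q' q0 hne'
          exact hne2 (hyp2 (fun _ => s) (fun _ => hw))
        subst hq
        rw [mapLabel_node]
        rfl
end Core
section Conform
variable {Q Sig Δ : Type} {rankS : Sig → ℕ} {rankD : Δ → ℕ}

theorem conformLemma {T : TDTT Q Sig Δ rankS rankD} (hCE : T.CanonicalEarliest)
    (s₀ : Tree Sig) (hs₀ : WF rankS s₀) :
    ∀ (R : Tree (Δ ⊕ Unit × ℕ)) (D' : Tree (Δ ⊕ Q × ℕ)), NVC D' →
    (∀ σ : ℕ → Tree Sig, (∀ i, WF rankS (σ i)) →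
      applyRhs (fun q i => T.semState q (embed (σ i))) D'
        = applyRhs (fun _ i => applyRhs (fun q _ => T.semState q (embed (σ i))) T.axm) R) →
    SubtreeConform T.axm D' := by
  intro R
  induction R using Tree.indOn with
  | h lab rs IH =>
    intro D' hD' hyp
    cases lab with
    | inr x =>
      obtain ⟨u0, jR⟩ := x
      have hyp' : ∀ σ : ℕ → Tree Sig, (∀ i, WF rankS (σ i)) →
          applyRhs (fun q i => T.semState q (embed (σ i))) D'
            = applyRhs (fun q _ => T.semState q (embed (σ jR))) T.axm := by
        intro σ hσ
        have := hyp σ hσ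
        rwa [applyRhs_inr] at this
      have hNA : NVC T.axm := NVC_of_WF T.axm_wf.1
      have hD : D' = mapLabel (Sum.map id (Prod.map id fun _ => jR)) T.axm :=
        renameLemma hCE s₀ hs₀ T.axm hNA D' hD' jR hyp'
      have haxv : ∀ x ∈ varList T.axm, x.2 = 0 :=
        fun x hx => Nat.lt_one_iff.mp (T.axm_wf.2 x hx)
      have hv : varList D' = (varList T.axm).map (Prod.map id fun _ => jR) := by
        rw [hD, varList_mapLabel]
      refine SubtreeConform.simeq D' ⟨fun _ => 0, ⟨?_, ?_, ?_⟩, ?_⟩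
      · -- MapsTo
        intro y hy
        simp only [Set.mem_setOf_eq, hv, List.map_map, List.mem_map] at hy ⊢
        obtain ⟨w, hw, -⟩ := hy
        exact ⟨w, hw, haxv w hw⟩
      · -- InjOn
        intro y hy z hz _
        simp only [Set.mem_setOf_eq, hv, List.map_map, List.mem_map] at hy hz
        obtain ⟨w, -, rfl⟩ := hy
        obtain ⟨w', -, rfl⟩ := hz
        rfl
      · -- SurjOn
        intro y hy
        simp only [Set.mem_setOf_eq, List.mem_map] at hy
        obtain ⟨w, hw, rfl⟩ := hy
        refine ⟨jR, ?_, (haxv w hw).symm⟩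
        simp only [Set.mem_setOf_eq, hv, List.map_map, List.mem_map]
        exact ⟨w, hw, rfl⟩
      · -- T.axm = mapLabel (…0) D'
        rw [hD, mapLabel_mapLabel]
        have hfun : (Sum.map (id : Δ → Δ) (Prod.map (id : Q → Q) fun _ : ℕ => (0:ℕ)))
              ∘ (Sum.map (id : Δ → Δ) (Prod.map (id : Q → Q) fun _ : ℕ => jR))
            = (Sum.map (id : Δ → Δ) (Prod.map (id : Q → Q) (fun _ : ℕ => (0:ℕ)))) := by
          funext x
          cases x <;> rfl
        rw [hfun]
        exact (mapLabel_eq_self hNA _ fun x hx => (haxv x hx).symm).symm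
    | inl d =>
      cases D' with
      | node lab' ds =>
        cases lab' with
        | inr x =>
          obtain ⟨q, j'⟩ := x
          exfalso
          obtain ⟨s₁, s₂, hw1, hw2, hne⟩ := hCE.1 q
          have e₁ := hyp (fun _ => s₁) (fun _ => hw1)
          have e₂ := hyp (fun _ => s₂) (fun _ => hw2)
          rw [applyRhs_inr] at e₁ e₂
          apply hne
          rw [e₁, e₂, label_applyRhs_inl, label_applyRhs_inl]
        | inl d' =>
          have hch : ∀ t ∈ ds, NVC t := by cases hD'; assumption
          have e₀ := hyp (fun _ => s₀) (fun _ => hs₀)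
          rw [applyRhs_inl, applyRhs_inl] at e₀
          obtain ⟨-, h2⟩ := Tree.node.inj e₀
          refine SubtreeConform.comp d' ds fun c hc => ?_
          obtain ⟨m, hm, rfl⟩ := List.getElem_of_mem hc
          obtain ⟨hm', -⟩ := map_eq_map_getElem h2 hm
          refine IH _ (List.getElem_mem hm') _ (hch _ hc) fun σ hσ => ?_
          have e := hyp σ hσ
          rw [applyRhs_inl, applyRhs_inl] at e
          obtain ⟨-, h2'⟩ := Tree.node.inj e
          obtain ⟨hm2, he⟩ := map_eq_map_getElem h2' hm
          exact he

end Conform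
/-- If a canonical earliest transducer `T` with axiom `A` is
equivalent to a homomorphism, then `T(a(x₁,…,x_k))` is subtree conform to `A`
for every `a ∈ Σ`. -/
theorem subtree_conform_of_hom {Q Sig Δ : Type} [Fintype Q] [Fintype Sig] [Fintype Δ]
    {rankS : Sig → ℕ} {rankD : Δ → ℕ}
    (T : TDTT Q Sig Δ rankS rankD) (hCE : T.CanonicalEarliest)
    (h : TDTT Unit Sig Δ rankS rankD) (hHom : h.IsHom) (hEq : T.Equiv h) :
    ∀ a : Sig, SubtreeConform T.axm (T.run (inputAtom rankS a)) := by
  intro a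
  have hNVCsem : ∀ q, NVC (T.semState q (inputAtom rankS a)) := by
    intro q
    rw [semState_inputAtom]
    exact NVC_applyRhs (fun q i => NVC.inr _) _
  have hND : NVC (T.run (inputAtom rankS a)) := by
    rw [TDTT.run]
    exact NVC_applyRhs (fun q i => hNVCsem q) _
  rcases hvl : varList (T.run (inputAtom rankS a)) with _ | ⟨x, tl⟩
  · exact SubtreeConform.ground _ hvl
  · obtain ⟨s₀, -, hs₀, -, -⟩ := hCE.1 x.1
    exact conformLemma hCE s₀ hs₀ (h.rhs () a) _ hND fun σ hσ => star hHom hEq a σ hσ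

end TreeTrans
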